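/- Let R be an infinite integral domain, n ≥ 2, and p(x₁,...,xₙ) = c₀ + Σ c_i x_i an associative affine polynomial function. Then c₁² = c₁ and cₙ² = cₙ. -/
import Mathlib


/-- Substituting `f` applied to the window `x_i, ..., x_{i+n-1}` into slot `i`
of `f` applied to the remaining outer variables among `x_1, ..., x_{2n-1}`. -/
def nestAt {R : Type*} (n : ℕ) (f : (Fin n → R) → R) (i : Fin n)
    (x : Fin (2 * n - 1) → R) : R :=
  f (fun j =>
    if (j : ℕ) < (i : ℕ) then x ⟨j, by have := j.isLt; have := i.isLt; omega⟩
    else if (j : ℕ) = (i : ℕ) then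
      f (fun k => x ⟨(i : ℕ) + (k : ℕ), by have := k.isLt; have := i.isLt; omega⟩)
    else x ⟨(j : ℕ) + n - 1, by have := j.isLt; have := i.isLt; omega⟩)

/-- `f` is `n`-ary associative: all the bracketings coincide. -/
def IsNAssoc {R : Type*} (n : ℕ) (f : (Fin n → R) → R) : Prop :=
  ∀ i j : Fin n, ∀ x : Fin (2 * n - 1) → R, nestAt n f i x = nestAt n f j x


lemma aux_sum {R : Type*} [CommRing R] {n : ℕ} (c : Fin n → R) (m : ℕ) (hm : m < n) (v : R) :
    ∑ j : Fin n, c j * (if (j:ℕ) = m then v else 0) = c ⟨m, hm⟩ * v := by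
  rw [Fintype.sum_eq_single ⟨m, hm⟩]
  · simp
  · intro j hj
    have : (j:ℕ) ≠ m := fun h => hj (Fin.ext h)
    simp [this]

set_option maxHeartbeats 4000000 in
theorem stmt_11 {R : Type*} [CommRing R] [IsDomain R] [Infinite R]
    (n : ℕ) (hn : 2 ≤ n) (c₀ : R) (c : Fin n → R)
    (hassoc : IsNAssoc n (fun x : Fin n → R => c₀ + ∑ i, c i * x i)) :
    c ⟨0, by omega⟩ ^ 2 = c ⟨0, by omega⟩ ∧
      c ⟨n - 1, by omega⟩ ^ 2 = c ⟨n - 1, by omega⟩ := by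
  set i0 : Fin n := ⟨0, by omega⟩ with hi0
  set i1 : Fin n := ⟨1, by omega⟩ with hi1
  set il : Fin n := ⟨n - 1, by omega⟩ with hil
  have key1 : ∀ t : R, c₀ + c i0 * (c₀ + c i0 * t) = c₀ + (c i0 * t + c i1 * c₀) := by
    intro t
    have h := hassoc i0 i1 (fun m => if (m:ℕ) = 0 then t else 0)
    unfold nestAt at h
    simp only at h
    rw [show (∑ x : Fin n,
        c x *
          if (x:ℕ) < 0 then if (x:ℕ) = 0 then t else 0
          else
            if (x:ℕ) = 0 then c₀ + ∑ y : Fin n, c y * if 0 + (y:ℕ) = 0 then t else 0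
            else if (x:ℕ) + n - 1 = 0 then t else 0)
        = c i0 * (c₀ + c i0 * t) from ?_,
      show (∑ x : Fin n,
        c x *
          if (x:ℕ) < 1 then if (x:ℕ) = 0 then t else 0
          else if (x:ℕ) = 1 then c₀ + ∑ y : Fin n, c y * if 1 + (y:ℕ) = 0 then t else 0
          else if (x:ℕ) + n - 1 = 0 then t else 0)
        = c i0 * t + c i1 * c₀ from ?_] at h
    · exact h
    · have split : ∀ j : Fin n,
          (c j *
            if (j:ℕ) < 1 then if (j:ℕ) = 0 then t else 0
            else if (j:ℕ) = 1 then c₀ + ∑ y : Fin n, c y * if 1 + (y:ℕ) = 0 then t else 0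
            else if (j:ℕ) + n - 1 = 0 then t else 0)
          = c j * (if (j:ℕ) = 0 then t else 0) + c j * (if (j:ℕ) = 1 then c₀ else 0) := by
        intro j
        have hin : (∑ y : Fin n, c y * if 1 + (y:ℕ) = 0 then t else 0) = 0 := by
          apply Finset.sum_eq_zero
          intro y _
          have : ¬ (1 + (y:ℕ) = 0) := by omega
          simp [this]
        rcases Nat.lt_or_ge (j:ℕ) 1 with hj | hj
        · have hj0 : (j:ℕ) = 0 := by omega
          simp [hj0]
        · have hj0 : ¬ ((j:ℕ) = 0) := by omega
          have hjl : ¬ ((j:ℕ) < 1) := by omega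
          by_cases hj1 : (j:ℕ) = 1
          · simp [hj1, hin]
          · have h2 : ¬ ((j:ℕ) + n - 1 = 0) := by omega
            simp [hj0, hjl, hj1, h2]
      rw [Finset.sum_congr rfl (fun j _ => split j), Finset.sum_add_distrib,
        aux_sum c 0 (by omega) t, aux_sum c 1 (by omega) c₀]
    · rw [← aux_sum c 0 (by omega) (c₀ + c i0 * t)]
      apply Finset.sum_congr rfl
      intro j _
      congr 1
      by_cases hj : (j:ℕ) = 0
      · have hin : (∑ y : Fin n, c y * if 0 + (y:ℕ) = 0 then t else 0) = c i0 * t := by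
          simpa using aux_sum c 0 (by omega) t
        have h1 : ¬ ((j:ℕ) < 0) := by omega
        rw [if_neg h1, if_pos hj, if_pos hj, hin]
      · have h1 : ¬ ((j:ℕ) < 0) := by omega
        have h2 : ¬ ((j:ℕ) + n - 1 = 0) := by omega
        simp [hj, h1, h2]
  have key2 : ∀ t : R, c₀ + (c i0 * c₀ + c il * t) = c₀ + c il * (c₀ + c il * t) := by
    intro t
    have h := hassoc i0 il (fun m => if (m:ℕ) = 2 * n - 2 then t else 0)
    unfold nestAt at h
    simp only at h
    rw [show (∑ x : Fin n,
        c x *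
          if (x:ℕ) < 0 then if (x:ℕ) = 2 * n - 2 then t else 0
          else
            if (x:ℕ) = 0 then c₀ + ∑ y : Fin n, c y * if 0 + (y:ℕ) = 2 * n - 2 then t else 0
            else if (x:ℕ) + n - 1 = 2 * n - 2 then t else 0)
        = c i0 * c₀ + c il * t from ?_,
      show (∑ x : Fin n,
        c x *
          if (x:ℕ) < n - 1 then if (x:ℕ) = 2 * n - 2 then t else 0
          else
            if (x:ℕ) = n - 1 then c₀ + ∑ y : Fin n, c y * if n - 1 + (y:ℕ) = 2 * n - 2 then t else 0
            else if (x:ℕ) + n - 1 = 2 * n - 2 then t else 0)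
        = c il * (c₀ + c il * t) from ?_] at h
    · exact h
    · rw [← aux_sum c (n-1) (by omega) (c₀ + c il * t)]
      apply Finset.sum_congr rfl
      intro j _
      congr 1
      have hj2 : ¬ ((j:ℕ) = 2 * n - 2) := by have := j.isLt; omega
      by_cases hj : (j:ℕ) = n - 1
      · have hin : (∑ y : Fin n, c y * if n - 1 + (y:ℕ) = 2 * n - 2 then t else 0)
            = c il * t := by
          rw [← aux_sum c (n-1) (by omega) t]
          apply Finset.sum_congr rfl
          intro y _
          have : (n - 1 + (y:ℕ) = 2 * n - 2) ↔ ((y:ℕ) = n - 1) := by omega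
          simp [this]
        have h1 : ¬ ((j:ℕ) < n - 1) := by omega
        rw [if_neg h1, if_pos hj, if_pos hj, hin]
      · rcases Nat.lt_or_ge (j:ℕ) (n-1) with hl | hl
        · simp [hj, hl, hj2]
        · have h1 : ¬ ((j:ℕ) < n - 1) := by omega
          have h2 : ¬ ((j:ℕ) + n - 1 = 2 * n - 2) := by omega
          simp [hj, h1, h2]
    · have hin : (∑ y : Fin n, c y * if 0 + (y:ℕ) = 2 * n - 2 then t else 0) = 0 := by
        apply Finset.sum_eq_zero
        intro y _
        have h1 : ¬ (0 + (y:ℕ) = 2 * n - 2) := by have := y.isLt; omega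
        rw [if_neg h1, mul_zero]
      have split : ∀ j : Fin n,
          (c j *
            if (j:ℕ) < 0 then if (j:ℕ) = 2 * n - 2 then t else 0
            else
              if (j:ℕ) = 0 then c₀ + ∑ y : Fin n, c y * if 0 + (y:ℕ) = 2 * n - 2 then t else 0
              else if (j:ℕ) + n - 1 = 2 * n - 2 then t else 0)
          = c j * (if (j:ℕ) = 0 then c₀ else 0) + c j * (if (j:ℕ) = n - 1 then t else 0) := by
        intro j
        have h1 : ¬ ((j:ℕ) < 0) := by omega
        by_cases hj : (j:ℕ) = 0
        · have hjl : ¬ ((j:ℕ) = n - 1) := by omega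
          rw [if_neg h1, if_pos hj, hin, if_pos hj, if_neg hjl]
          ring
        · have : ((j:ℕ) + n - 1 = 2 * n - 2) ↔ ((j:ℕ) = n - 1) := by omega
          simp [hj, h1, this]
      rw [Finset.sum_congr rfl (fun j _ => split j), Finset.sum_add_distrib,
        aux_sum c 0 (by omega) c₀, aux_sum c (n-1) (by omega) t]
  have e1 := key1 1
  have e0 := key1 0
  have f1 := key2 1
  have f0 := key2 0
  constructor
  · have : c i0 * c i0 = c i0 := by linear_combination e1 - e0
    simpa [pow_two] using this
  · have : c il * c il = c il := by linear_combination f0 - f1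
    simpa [pow_two] using this
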